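/- arXiv:math/0511036 — 4 statements merged into one kernel-verified Lean document; each statement's English description precedes it below -/
import Mathlib

section
/- For every integer i ≥ 2, every 0 < ε < 1, and all reals x, y with 0 < y ≤ x ≤ 1 − ε, one has ∫_x^{x+ε} (i−1)·(log(t/y))^{i−2} / (t·(log(1/y))^{i−1}) dt > ( ε / (2·max(1, log(1/y))) )^i. -/
open MeasureTheory

/-- Lemma (a calculus estimate): for `i ≥ 2`, `0 < ε < 1` and `0 < y ≤ x ≤ 1 − ε`,
`∫_x^{x+ε} (i−1) (log(t/y))^{i−2} / (t (log(1/y))^{i−1}) dt > (ε/(2 max(1, log(1/y))))^i`. -/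
theorem stmt8 (i : ℕ) (hi : 2 ≤ i) (ε x y : ℝ) (hε0 : 0 < ε) (hε1 : ε < 1)
    (hy : 0 < y) (hyx : y ≤ x) (hx : x ≤ 1 - ε) :
    (ε / (2 * max 1 (Real.log (1 / y)))) ^ i <
      ∫ t in x..(x + ε),
        ((i : ℝ) - 1) * (Real.log (t / y)) ^ (i - 2) / (t * (Real.log (1 / y)) ^ (i - 1)) := by
  obtain ⟨n, rfl⟩ : ∃ n, i = n + 2 := ⟨i - 2, by omega⟩
  have e1 : n + 2 - 2 = n := by omega
  have e2 : n + 2 - 1 = n + 1 := by omega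
  rw [e1, e2]
  have hx0 : 0 < x := lt_of_lt_of_le hy hyx
  have hy1 : y < 1 := lt_of_le_of_lt hyx (by linarith)
  set L := Real.log (1 / y) with hLdef
  have hL : 0 < L := Real.log_pos (by rw [lt_div_iff₀ hy]; linarith)
  set M := max 1 L with hMdef
  have hM1 : (1 : ℝ) ≤ M := le_max_left _ _
  have hML : L ≤ M := le_max_right _ _
  have hle : x ≤ x + ε := by linarith
  have key : (∫ t in x..(x + ε),
      ((↑(n + 2) : ℝ) - 1) * (Real.log (t / y)) ^ n / (t * L ^ (n + 1))) =
      (Real.log ((x + ε) / y)) ^ (n + 1) / L ^ (n + 1)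
        - (Real.log (x / y)) ^ (n + 1) / L ^ (n + 1) := by
    apply intervalIntegral.integral_eq_sub_of_hasDerivAt
      (f := fun t => (Real.log (t / y)) ^ (n + 1) / L ^ (n + 1))
    · intro t ht
      rw [Set.uIcc_of_le hle] at ht
      have ht0 : 0 < t := lt_of_lt_of_le hx0 ht.1
      have hty : t / y ≠ 0 := (div_pos ht0 hy).ne'
      have h1 : HasDerivAt (fun s : ℝ => s / y) (1 / y) t := by
        simpa using (hasDerivAt_id t).div_const y
      have h2 : HasDerivAt (fun s : ℝ => Real.log (s / y)) ((t / y)⁻¹ * (1 / y)) t :=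
        by have := (Real.hasDerivAt_log hty).comp t h1; exact this
      have h3 := (h2.pow (n + 1)).div_const (L ^ (n + 1))
      convert h3 using 1
      case e'_4 => rfl
      case e'_8 => rfl
      have hyt : (t / y)⁻¹ * (1 / y) = 1 / t := by
        field_simp
      rw [hyt]
      simp only [Nat.add_sub_cancel]
      rw [mul_one_div, div_div]
      congr 1
      push_cast
      ring
    · apply ContinuousOn.intervalIntegrable
      apply ContinuousOn.div
      · apply ContinuousOn.mul continuousOn_const
        apply ContinuousOn.pow
        apply ContinuousOn.log
        · exact continuousOn_id.div_const y
        · intro t ht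
          rw [Set.uIcc_of_le hle] at ht
          exact (div_pos (lt_of_lt_of_le hx0 ht.1) hy).ne'
      · exact continuousOn_id.mul continuousOn_const
      · intro t ht
        rw [Set.uIcc_of_le hle] at ht
        have ht0 : 0 < t := lt_of_lt_of_le hx0 ht.1
        positivity
  rw [key]
  set a := Real.log (x / y) with hadef
  set b := Real.log ((x + ε) / y) with hbdef
  set c := Real.log ((x + ε) / x) with hcdef
  have ha : 0 ≤ a := Real.log_nonneg ((one_le_div hy).mpr hyx)
  have hbL : b ≤ L := by
    apply Real.log_le_log (by positivity)
    exact (div_le_div_iff_of_pos_right hy).mpr (by linarith)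
  have hab : a + c = b := by
    rw [hadef, hcdef, hbdef, ← Real.log_mul (by positivity) (by positivity)]
    congr 1
    field_simp
  have hc : ε / 2 ≤ c := by
    have h1 : 1 + ε ≤ (x + ε) / x := by
      rw [le_div_iff₀ hx0]; nlinarith
    have h2 : Real.log (1 + ε) ≤ c := Real.log_le_log (by linarith) h1
    have h3 : Real.log (1 / (1 + ε)) ≤ 1 / (1 + ε) - 1 :=
      Real.log_le_sub_one_of_pos (by positivity)
    rw [Real.log_div one_ne_zero (by positivity : (1 : ℝ) + ε ≠ 0), Real.log_one] at h3
    have h4 : 1 - 1 / (1 + ε) = ε / (1 + ε) := by field_simp; ring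
    have h5 : ε / 2 ≤ ε / (1 + ε) := by
      apply div_le_div_of_nonneg_left hε0.le (by linarith) (by linarith)
    linarith
  have hc0 : 0 ≤ c := le_trans (by linarith) hc
  have hsuper : a ^ (n + 1) + c ^ (n + 1) ≤ b ^ (n + 1) := by
    calc a ^ (n + 1) + c ^ (n + 1) ≤ (a + c) ^ (n + 1) :=
          pow_add_pow_le ha hc0 (Nat.succ_ne_zero n)
      _ = b ^ (n + 1) := by rw [hab]
  have hcL : ε / (2 * M) ≤ c / L := by
    rw [div_le_div_iff₀ (by positivity) hL]
    nlinarith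
  have hstep : (ε / (2 * M)) ^ (n + 1) ≤ b ^ (n + 1) / L ^ (n + 1) - a ^ (n + 1) / L ^ (n + 1) := by
    calc (ε / (2 * M)) ^ (n + 1) ≤ (c / L) ^ (n + 1) :=
          pow_le_pow_left₀ (by positivity) hcL _
      _ = c ^ (n + 1) / L ^ (n + 1) := div_pow c L (n + 1)
      _ ≤ b ^ (n + 1) / L ^ (n + 1) - a ^ (n + 1) / L ^ (n + 1) := by
          rw [div_sub_div_same]
          exact (div_le_div_iff_of_pos_right (by positivity)).mpr (by linarith)
  have hlt : (ε / (2 * M)) ^ (n + 2) < (ε / (2 * M)) ^ (n + 1) := by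
    apply pow_lt_pow_right_of_lt_one₀ (by positivity) ?_ (by omega)
    rw [div_lt_one (by positivity)]
    nlinarith
  linarith
end

section
/- Let a < y_0 be reals and let h : [a, y_0] → ℝ be a bounded measurable function such that for every x ∈ [a, y_0), h(x) ≤ (1/(y_0 − x)) ∫_x^{y_0} h(s) ds. Then for all x, t with a ≤ x < t < y_0, h(x) ≤ (1/(y_0 − t)) ∫_t^{y_0} h(s) ds. -/
open MeasureTheory Set

/-- Lemma: if a bounded measurable `h` satisfies `h(x) ≤ (1/(y₀−x)) ∫_x^{y₀} h` for every
`x ∈ [a, y₀)`, then `h(x) ≤ (1/(y₀−t)) ∫_t^{y₀} h` for all `a ≤ x < t < y₀`. -/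
theorem stmt16 (a y₀ : ℝ) (hay : a < y₀) (h : ℝ → ℝ) (hmeas : Measurable h)
    (hbdd : ∃ B : ℝ, ∀ x ∈ Set.Icc a y₀, |h x| ≤ B)
    (hyp : ∀ x ∈ Set.Ico a y₀, h x ≤ (1 / (y₀ - x)) * ∫ s in x..y₀, h s) :
    ∀ x t : ℝ, a ≤ x → x < t → t < y₀ →
      h x ≤ (1 / (y₀ - t)) * ∫ s in t..y₀, h s := by
  obtain ⟨B₀, hB₀⟩ := hbdd
  -- integrability of h on [a, y₀]
  have hint : IntegrableOn h (Icc a y₀) := by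
    apply Measure.integrableOn_of_bounded (M := B₀)
      (by simp) hmeas.aestronglyMeasurable
    · filter_upwards [ae_restrict_mem measurableSet_Icc] with s hs
      simpa using hB₀ s hs
  have hii : ∀ u v, u ∈ Icc a y₀ → v ∈ Icc a y₀ → IntervalIntegrable h volume u v :=
    fun u v hu hv => (hint.mono_set (uIcc_subset_Icc hu hv)).intervalIntegrable
  set F : ℝ → ℝ := fun u => ∫ s in u..y₀, h s with hF
  have Fsplit : ∀ u v, u ∈ Icc a y₀ → v ∈ Icc a y₀ →
      (∫ s in u..v, h s) + F v = F u := by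
    intro u v hu hv
    exact intervalIntegral.integral_add_adjacent_intervals (hii u v hu hv)
      (hii v y₀ hv (right_mem_Icc.2 hay.le))
  have Fcont : ContinuousOn F (Icc a y₀) := by
    have := intervalIntegral.continuousOn_primitive_interval_left (f := h) (μ := volume) (a := a) (b := y₀)
      (by rwa [uIcc_of_le hay.le])
    rwa [uIcc_of_le hay.le] at this
  intro x t hax hxt hty
  have hxy : x < y₀ := hxt.trans hty
  have hyt : (0:ℝ) < y₀ - t := by linarith
  have hyx : (0:ℝ) < y₀ - x := by linarith
  set k : ℝ := (1 / (y₀ - t)) * F t with hk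
  have hkt : k * (y₀ - t) = F t := by
    rw [hk]; field_simp
  -- the slope bound function
  set g : ℝ → ℝ := fun s => (1 / (y₀ - s)) * F s with hg
  have gcont : ContinuousOn g (Icc a t) := by
    apply ContinuousOn.mul
    · apply ContinuousOn.div continuousOn_const
        (continuousOn_const.sub continuousOn_id)
      intro s hs
      have : s < y₀ := lt_of_le_of_lt hs.2 hty
      intro hc; rw [Pi.sub_apply, sub_eq_zero] at hc; simp only [id_eq] at hc; linarith
    · exact Fcont.mono (Icc_subset_Icc le_rfl hty.le)
  set f : ℝ → ℝ := fun r => F (t - r) with hf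
  set L : ℝ := (y₀ - t)⁻¹ + 1 with hL
  have hLpos : 0 < L := by positivity
  -- the key estimate: for every ε > 0, F x ≤ k * (y₀ - x) + ε * exp (L * (t - x))
  have key : ∀ ε : ℝ, 0 < ε → F x ≤ k * (y₀ - x) + ε * Real.exp (L * (t - x)) := by
    intro ε hε
    set Bf : ℝ → ℝ := fun r => k * (y₀ - t + r) + ε * Real.exp (L * r) with hBf
    set B' : ℝ → ℝ := fun r => k + ε * (Real.exp (L * r) * L) with hB'
    set f' : ℝ → ℝ := fun r => g (t - r) with hf'
    have sub_mem : ∀ r ∈ Icc (0:ℝ) (t - a), t - r ∈ Icc a y₀ := by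
      intro r hr
      constructor <;> [linarith [hr.2]; linarith [hr.1]]
    have hfc : ContinuousOn f (Icc 0 (t - a)) := by
      apply Fcont.comp (continuousOn_const.sub continuousOn_id) sub_mem
    have hslope : ∀ r ∈ Ico (0:ℝ) (t - a), ∀ c, f' r < c →
        ∃ᶠ z in nhdsWithin r (Ioi r), slope f r z < c := by
      intro r hr c hc
      set c' : ℝ := (f' r + c) / 2 with hc'
      have hc1 : f' r < c' := by rw [hc']; linarith
      have hc2 : c' < c := by rw [hc']; linarith
      have hs₀ : t - r ∈ Icc a t := by
        constructor <;> [linarith [hr.2]; linarith [hr.1]]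
      have hev : ∀ᶠ s in nhdsWithin (t - r) (Icc a t), g s < c' :=
        Filter.Tendsto.eventually_lt_const hc1 (gcont (t - r) hs₀)
      rw [Filter.eventually_iff, Metric.mem_nhdsWithin_iff] at hev
      obtain ⟨δ, hδ, hball⟩ := hev
      have hm : r < min (r + δ / 2) (t - a) := by
        apply lt_min (by linarith) hr.2
      apply Filter.Eventually.frequently
      filter_upwards [Ioc_mem_nhdsGT_of_mem ⟨le_rfl, hm⟩] with z hz
      have hz1 : r < z := hz.1
      have hz2 : z ≤ r + δ / 2 := le_trans hz.2 (min_le_left _ _)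
      have hz3 : z ≤ t - a := le_trans hz.2 (min_le_right _ _)
      have htz : t - z ∈ Icc a y₀ := ⟨by linarith, by linarith [hr.1]⟩
      have htr : t - r ∈ Icc a y₀ := ⟨by linarith [hr.2], by linarith [hr.1]⟩
      -- pointwise bound h ≤ c' on [t - z, t - r]
      have hpt : ∀ s ∈ Icc (t - z) (t - r), h s ≤ c' := by
        intro s hs
        have hs1 : s ∈ Ico a y₀ := ⟨by linarith [hs.1], by linarith [hs.2, hr.1]⟩
        have hs2 : g s < c' := by
          apply hball
          constructor
          · rw [Metric.mem_ball, Real.dist_eq, abs_lt]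
            constructor <;> [linarith [hs.1]; linarith [hs.2, hδ]]
          · exact ⟨by linarith [hs.1], by linarith [hs.2, hr.1]⟩
        exact le_trans (hyp s hs1) (le_of_lt hs2)
      have hle : t - z ≤ t - r := by linarith
      have hintle : (∫ s in (t - z)..(t - r), h s) ≤ c' * (z - r) := by
        have := intervalIntegral.integral_mono_on hle (hii _ _ htz htr)
          (intervalIntegrable_const (c := c')) hpt
        calc (∫ s in (t - z)..(t - r), h s) ≤ ∫ _ in (t - z)..(t - r), c' := this
          _ = c' * (z - r) := by rw [intervalIntegral.integral_const, smul_eq_mul]; ring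
      have hdiff : f z - f r = ∫ s in (t - z)..(t - r), h s := by
        have := Fsplit (t - z) (t - r) htz htr
        show F (t - z) - F (t - r) = ∫ s in (t - z)..(t - r), h s
        linarith
      have : slope f r z = (f z - f r) / (z - r) := by
        rw [slope_def_field]
      rw [this, hdiff]
      calc (∫ s in (t - z)..(t - r), h s) / (z - r) ≤ c' * (z - r) / (z - r) := by
            apply div_le_div_of_nonneg_right ?_ ?_ |>.trans_eq rfl
            · exact hintle
            · linarith
        _ = c' := by rw [mul_div_assoc, div_self (ne_of_gt (by linarith : (0:ℝ) < z - r)), mul_one]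
        _ < c := hc2
    have hBd : ∀ r, HasDerivAt Bf (B' r) r := by
      intro r
      have h1 : HasDerivAt (fun r => k * (y₀ - t + r)) k r := by
        simpa using ((hasDerivAt_id r).const_add (y₀ - t)).const_mul k
      have h2 : HasDerivAt (fun r => Real.exp (L * r)) (Real.exp (L * r) * L) r := by
        have := (Real.hasDerivAt_exp (L * r)).comp r ((hasDerivAt_id r).const_mul L)
        simp only [mul_one] at this; exact this
      exact h1.add (h2.const_mul ε)
    have ha0 : f 0 ≤ Bf 0 := by
      simp only [hf, hBf, sub_zero, mul_zero, Real.exp_zero, mul_one]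
      linarith [hkt]
    have hbound : ∀ r ∈ Ico (0:ℝ) (t - a), f r = Bf r → f' r < B' r := by
      intro r hr hfr
      have hpos : 0 < y₀ - t + r := by linarith [hr.1]
      have hfr' : F (t - r) = k * (y₀ - t + r) + ε * Real.exp (L * r) := hfr
      have : f' r = (k * (y₀ - t + r) + ε * Real.exp (L * r)) / (y₀ - t + r) := by
        simp only [hf', hg]
        rw [← hfr']
        have : y₀ - (t - r) = y₀ - t + r := by ring
        rw [this]; ring
      rw [this]
      rw [div_lt_iff₀ hpos]
      have hexp : 0 < Real.exp (L * r) := Real.exp_pos _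
      have hLr : 1 < L * (y₀ - t + r) := by
        have h1 : (y₀ - t)⁻¹ * (y₀ - t) = 1 := inv_mul_cancel₀ (ne_of_gt hyt)
        have h2 : (y₀ - t)⁻¹ * (y₀ - t + r) ≥ 1 := by
          rw [mul_add, h1]
          linarith [mul_nonneg (le_of_lt (inv_pos.2 hyt)) hr.1]
        rw [hL]
        nlinarith
      simp only [hB']
      nlinarith [mul_lt_mul_of_pos_left hLr (mul_pos hε hexp)]
    have := image_le_of_liminf_slope_right_lt_deriv_boundary hfc hslope ha0 hBd hbound
      (show t - x ∈ Icc 0 (t - a) from ⟨by linarith, by linarith⟩)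
    have hfx : f (t - x) = F x := by simp [hf]
    have hBx : Bf (t - x) = k * (y₀ - x) + ε * Real.exp (L * (t - x)) := by
      simp only [hBf]; ring_nf
    rw [hfx, hBx] at this
    exact this
  -- pass to the limit ε → 0
  have hFx : F x ≤ k * (y₀ - x) := by
    have hE : 0 < Real.exp (L * (t - x)) := Real.exp_pos _
    by_contra hcon
    push_neg at hcon
    set ε := (F x - k * (y₀ - x)) / (2 * Real.exp (L * (t - x))) with hε
    have hεpos : 0 < ε := by apply div_pos (by linarith) (by positivity)
    have := key ε hεpos
    rw [hε] at this
    have : F x ≤ k * (y₀ - x) + (F x - k * (y₀ - x)) / 2 := by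
      have heq : (F x - k * (y₀ - x)) / (2 * Real.exp (L * (t - x))) * Real.exp (L * (t - x))
          = (F x - k * (y₀ - x)) / 2 := by field_simp
      linarith [this, heq ▸ this]
    linarith
  -- conclude
  have h1 : h x ≤ (1 / (y₀ - x)) * F x := hyp x ⟨hax, hxy⟩
  have h2 : (1 / (y₀ - x)) * F x ≤ (1 / (y₀ - x)) * (k * (y₀ - x)) := by
    apply mul_le_mul_of_nonneg_left hFx (by positivity)
  have h3 : (1 / (y₀ - x)) * (k * (y₀ - x)) = k := by field_simp
  calc h x ≤ (1 / (y₀ - x)) * F x := h1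
    _ ≤ (1 / (y₀ - x)) * (k * (y₀ - x)) := h2
    _ = k := h3
end

section
/- Let p be a Lebesgue-measurable function on {(x,y) : 0 ≤ x ≤ y ≤ 1} with values in [0,1] satisfying p(x,y) = (1/(y−x)) ∫_x^y p(x,t)·p(t,y) dt for all 0 ≤ x < y ≤ 1. Then p is decreasing in its second argument almost everywhere: for almost every triple (x,y,z) ∈ [0,1]³ with x ≤ y ≤ z, p(x,z) ≤ p(x,y). -/
open MeasureTheory

open Set Function

lemma intOn {f : ℝ → ℝ} (hf : Measurable f) {a b C : ℝ}
    (hC : ∀ s ∈ Set.Ioc a b, |f s| ≤ C) :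
    IntegrableOn f (Set.Ioc a b) := by
  haveI : IsFiniteMeasure (volume.restrict (Set.Ioc a b)) :=
    ⟨by rw [Measure.restrict_apply_univ]; exact measure_Ioc_lt_top⟩
  apply Integrable.mono' (integrable_const C) hf.aestronglyMeasurable
  filter_upwards [ae_restrict_mem measurableSet_Ioc] with s hs
  simpa using hC s hs

lemma tri_swap {a b : ℝ} (f : ℝ → ℝ → ℝ)
    (hf : Measurable (uncurry f))
    (hbd : ∀ s t, s ∈ Set.Ioc a b → t ∈ Set.Ioc a b → s ≤ t → |f s t| ≤ 1) :
    ∫ t in Set.Ioc a b, (∫ s in Set.Ioc a t, f s t) =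
      ∫ s in Set.Ioc a b, (∫ t in Set.Ioc s b, f s t) := by
  set μ := volume.restrict (Set.Ioc a b) with hμ
  haveI : IsFiniteMeasure μ :=
    ⟨by rw [hμ, Measure.restrict_apply_univ]; exact measure_Ioc_lt_top⟩
  set E : Set (ℝ × ℝ) := {q : ℝ × ℝ | q.1 ≤ q.2} with hE
  have hEm : MeasurableSet E := measurableSet_le measurable_fst measurable_snd
  set H : ℝ → ℝ → ℝ := fun s t => Set.indicator E (uncurry f) (s, t) with hH
  have hHm : Measurable (uncurry H) := hf.indicator hEm
  have hint : Integrable (uncurry H) (μ.prod μ) := by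
    apply Integrable.mono' (integrable_const 1) hHm.aestronglyMeasurable
    have h1 : ∀ᵐ q : ℝ × ℝ ∂(μ.prod μ), q.1 ∈ Set.Ioc a b ∧ q.2 ∈ Set.Ioc a b := by
      rw [hμ, Measure.prod_restrict]
      filter_upwards [ae_restrict_mem (measurableSet_Ioc.prod measurableSet_Ioc)] with q hq
      exact hq
    filter_upwards [h1] with q hq
    rcases le_or_gt q.1 q.2 with h | h
    · have : uncurry H q = f q.1 q.2 := by
        simp only [hH, uncurry]
        exact Set.indicator_of_mem (by simpa [hE] using h) _
      rw [Real.norm_eq_abs, this]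
      exact hbd q.1 q.2 hq.1 hq.2 h
    · have : uncurry H q = 0 := by
        simp only [hH, uncurry]
        exact Set.indicator_of_notMem (by simpa [hE] using h) _
      rw [Real.norm_eq_abs, this]; simp
  have swap := integral_integral_swap (f := H) hint
  -- swap : ∫ s, ∫ t, H s t ∂μ ∂μ = ∫ t, ∫ s, H s t ∂μ ∂μ
  have key1 : ∀ t ∈ Set.Ioc a b, (∫ s, H s t ∂μ) = ∫ s in Set.Ioc a t, f s t := by
    intro t ht
    have : (fun s => H s t) = Set.indicator (Set.Iic t) (fun s => f s t) := by
      funext s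
      by_cases h : s ≤ t
      · rw [Set.indicator_of_mem (Set.mem_Iic.2 h)]
        exact Set.indicator_of_mem (by simpa [hE] using h) _
      · rw [Set.indicator_of_notMem (by simpa using h)]
        exact Set.indicator_of_notMem (by simpa [hE] using h) _
    rw [hμ, this, integral_indicator measurableSet_Iic, Measure.restrict_restrict measurableSet_Iic]
    congr 1
    have hset : Set.Iic t ∩ Set.Ioc a b = Set.Ioc a t := by
      ext s
      simp only [Set.mem_inter_iff, Set.mem_Iic, Set.mem_Ioc]
      exact ⟨fun h => ⟨h.2.1, h.1⟩, fun h => ⟨h.2, h.1, h.2.trans ht.2⟩⟩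
    rw [hset]
  have key2 : ∀ s ∈ Set.Ioc a b, (∫ t, H s t ∂μ) = ∫ t in Set.Ioc s b, f s t := by
    intro s hs
    have : (fun t => H s t) = Set.indicator (Set.Ici s) (fun t => f s t) := by
      funext t
      by_cases h : s ≤ t
      · rw [Set.indicator_of_mem (Set.mem_Ici.2 h)]
        exact Set.indicator_of_mem (by simpa [hE] using h) _
      · rw [Set.indicator_of_notMem (by simpa using h)]
        exact Set.indicator_of_notMem (by simpa [hE] using h) _
    rw [hμ, this, integral_indicator measurableSet_Ici, Measure.restrict_restrict measurableSet_Ici]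
    have hset : Set.Ici s ∩ Set.Ioc a b = Set.Icc s b := by
      ext t
      simp only [Set.mem_inter_iff, Set.mem_Ici, Set.mem_Ioc, Set.mem_Icc]
      exact ⟨fun h => ⟨h.1, h.2.2⟩, fun h => ⟨h.1, lt_of_lt_of_le hs.1 h.1, h.2⟩⟩
    rw [hset, integral_Icc_eq_integral_Ioc]
  calc ∫ t in Set.Ioc a b, (∫ s in Set.Ioc a t, f s t)
      = ∫ t, (∫ s, H s t ∂μ) ∂μ :=
        setIntegral_congr_fun measurableSet_Ioc (fun t ht => (key1 t ht).symm)
    _ = ∫ s, (∫ t, H s t ∂μ) ∂μ := swap.symm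
    _ = ∫ s in Set.Ioc a b, (∫ t in Set.Ioc s b, f s t) :=
        setIntegral_congr_fun measurableSet_Ioc (fun s hs => key2 s hs)

lemma abs3le1 {u v w : ℝ} (hu : |u| ≤ 1) (hv : |v| ≤ 1) (hw : |w| ≤ 1) :
    |u * v * w| ≤ 1 := by
  rw [abs_mul, abs_mul]
  exact mul_le_one₀ (mul_le_one₀ hu (abs_nonneg _) hv) (abs_nonneg _) hw

section main
variable (p : ℝ → ℝ → ℝ) (hmeas : Measurable (Function.uncurry p))
    (hrange : ∀ x y : ℝ, 0 ≤ x → x ≤ y → y ≤ 1 → p x y ∈ Set.Icc (0:ℝ) 1)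
    (heq : ∀ x y : ℝ, 0 ≤ x → x < y → y ≤ 1 →
      p x y = (1 / (y - x)) * ∫ t in x..y, p x t * p t y)

include hmeas hrange in
lemma pmint {a b : ℝ} (ha : 0 ≤ a) (hb : b ≤ 1) (hab : a ≤ b) (j : ℕ) :
    IntegrableOn (fun s => p a s * p s b * (s - a)^j) (Set.Ioc a b) := by
  apply intOn
  · exact ((hmeas.of_uncurry_left).mul (hmeas.of_uncurry_right)).mul
      ((measurable_id.sub_const a).pow_const j)
  · intro s hs
    have h1 := hrange a s ha hs.1.le (hs.2.trans hb)
    have h2 := hrange s b (ha.trans hs.1.le) hs.2 hb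
    refine abs3le1 ?_ ?_ ?_
    · rw [abs_of_nonneg h1.1]; exact h1.2
    · rw [abs_of_nonneg h2.1]; exact h2.2
    · rw [abs_pow]
      refine pow_le_one₀ (abs_nonneg _) ?_
      rw [abs_of_nonneg (by linarith [hs.1] : (0:ℝ) ≤ s - a)]
      linarith [hs.2]

include hmeas hrange heq in
lemma moments : ∀ (k : ℕ) (a b : ℝ), 0 ≤ a → a < b → b ≤ 1 →
    ∫ s in Set.Ioc a b, p a s * p s b * (s - a)^k
      = p a b * (b - a)^(k+1) / ((k : ℝ) + 1) := by
  intro k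
  induction k with
  | zero =>
    intro a b ha hab hb
    have h := heq a b ha hab hb
    rw [intervalIntegral.integral_of_le hab.le] at h
    have hba : b - a ≠ 0 := sub_ne_zero.2 hab.ne'
    simp only [pow_zero, mul_one, Nat.cast_zero, zero_add, pow_one, div_one]
    rw [h]; field_simp
  | succ k ih =>
    intro a b ha hab hb
    set Ik := ∫ s in Set.Ioc a b, p a s * p s b * (s - a)^k with hIk
    set Ik1 := ∫ s in Set.Ioc a b, p a s * p s b * (s - a)^(k+1) with hIk1
    have hIkval : Ik = p a b * (b - a)^(k+1) / ((k : ℝ) + 1) := ih a b ha hab hb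
    -- Fubini swap
    set f : ℝ → ℝ → ℝ := fun s t => p a s * p s t * p t b * (s - a)^k with hf
    have hfm : Measurable (uncurry f) := by
      show Measurable fun q : ℝ × ℝ => p a q.1 * p q.1 q.2 * p q.2 b * (q.1 - a)^k
      exact (((hmeas.of_uncurry_left.comp measurable_fst).mul hmeas).mul
        ((hmeas.of_uncurry_right).comp measurable_snd)).mul
        ((measurable_fst.sub_const a).pow_const k)
    have hbd : ∀ s t, s ∈ Set.Ioc a b → t ∈ Set.Ioc a b → s ≤ t → |f s t| ≤ 1 := by
      intro s t hs ht hst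
      have h1 := hrange a s ha hs.1.le (hs.2.trans hb)
      have h2 := hrange s t (ha.trans hs.1.le) hst (ht.2.trans hb)
      have h3 := hrange t b (ha.trans ht.1.le) ht.2 hb
      have h4 : |(s - a)^k| ≤ 1 := by
        rw [abs_pow]
        refine pow_le_one₀ (abs_nonneg _) ?_
        rw [abs_of_nonneg (by linarith [hs.1] : (0:ℝ) ≤ s - a)]
        linarith [hs.2]
      rw [hf]
      have := abs3le1 (u := p a s) (v := p s t) (w := p t b)
        (by rw [abs_of_nonneg h1.1]; exact h1.2)
        (by rw [abs_of_nonneg h2.1]; exact h2.2)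
        (by rw [abs_of_nonneg h3.1]; exact h3.2)
      calc |p a s * p s t * p t b * (s-a)^k| = |p a s * p s t * p t b| * |(s-a)^k| := abs_mul _ _
        _ ≤ 1 * 1 := mul_le_mul this h4 (abs_nonneg _) zero_le_one
        _ = 1 := by ring
    have swap := tri_swap f hfm hbd
    have hLHS : (∫ t in Set.Ioc a b, (∫ s in Set.Ioc a t, f s t))
        = Ik1 * (1 / ((k:ℝ) + 1)) := by
      have hcong : ∀ t ∈ Set.Ioc a b, (∫ s in Set.Ioc a t, f s t)
          = p a t * p t b * (t - a)^(k+1) * (1 / ((k:ℝ)+1)) := by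
        intro t ht
        have h1 : (∫ s in Set.Ioc a t, f s t)
            = (∫ s in Set.Ioc a t, p a s * p s t * (s - a)^k) * p t b := by
          rw [← integral_mul_const]
          refine setIntegral_congr_fun measurableSet_Ioc (fun s hs => ?_)
          simp only [hf]; ring
        rw [h1, ih a t ha ht.1 (ht.2.trans hb)]
        ring
      rw [setIntegral_congr_fun measurableSet_Ioc (fun t ht => hcong t ht),
        integral_mul_const]
    have hRHS : (∫ s in Set.Ioc a b, (∫ t in Set.Ioc s b, f s t))
        = Ik * (b - a) - Ik1 := by
      have hcong : ∀ s ∈ Set.Ioc a b, (∫ t in Set.Ioc s b, f s t)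
          = p a s * p s b * (s-a)^k * (b-a) - p a s * p s b * (s-a)^(k+1) := by
        intro s hs
        have hinner : (∫ t in Set.Ioc s b, p s t * p t b) = (b - s) * p s b := by
          rcases eq_or_lt_of_le hs.2 with h | h
          · rw [h]; simp
          · have h2 := heq s b (ha.trans hs.1.le) h hb
            rw [intervalIntegral.integral_of_le hs.2] at h2
            have hbs : b - s ≠ 0 := sub_ne_zero.2 h.ne'
            rw [h2]; field_simp
        have h1 : (∫ t in Set.Ioc s b, f s t)
            = (∫ t in Set.Ioc s b, p s t * p t b) * (p a s * (s-a)^k) := by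
          rw [← integral_mul_const]
          refine setIntegral_congr_fun measurableSet_Ioc (fun t ht => ?_)
          simp only [hf]; ring
        rw [h1, hinner]; ring
      rw [setIntegral_congr_fun measurableSet_Ioc (fun s hs => hcong s hs)]
      rw [integral_sub ((pmint p hmeas hrange ha hb hab.le k).mul_const _)
        (pmint p hmeas hrange ha hb hab.le (k+1)), integral_mul_const]
    have heqn : Ik1 * (1/((k:ℝ)+1)) = Ik * (b-a) - Ik1 := by
      rw [← hLHS, ← hRHS]; exact swap
    rw [hIkval] at heqn
    have hk : ((k:ℝ)+1) ≠ 0 := by positivity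
    have hk2 : ((k:ℝ)+1+1) ≠ 0 := by positivity
    push_cast
    have hpow : (b-a)^(k+1) * (b-a) = (b-a)^(k+1+1) := by ring
    field_simp at heqn ⊢
    ring_nf at heqn ⊢
    linarith [heqn]
include hmeas hrange heq in
lemma pair_ae {x z : ℝ} (hx : 0 ≤ x) (hxz : x < z) (hz : z ≤ 1) :
    ∀ᵐ y : ℝ ∂volume, y ∈ Set.Ioc x z → p x z ≤ p x y := by
  set g : ℝ → ℝ := fun y => p x y * p y z with hg
  set c : ℝ := p x z with hcdef
  have hgm : Measurable g := (hmeas.of_uncurry_left).mul (hmeas.of_uncurry_right)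
  have hc : c ∈ Set.Icc (0:ℝ) 1 := hrange x z hx hxz.le hz
  have hgc : ∀ y ∈ Set.Ioc x z, g y ∈ Set.Icc (0:ℝ) 1 := by
    intro y hy
    have h1 := hrange x y hx hy.1.le (hy.2.trans hz)
    have h2 := hrange y z (hx.trans hy.1.le) hy.2 hz
    exact ⟨mul_nonneg h1.1 h2.1, mul_le_one₀ h1.2 h2.1 h2.2⟩
  have hsub : ∀ y ∈ Set.Ioc x z, |g y - c| ≤ 1 := by
    intro y hy
    have := hgc y hy
    rw [abs_le]
    constructor <;> [linarith [this.1, hc.2]; linarith [this.2, hc.1]]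
  have hyle : ∀ y ∈ Set.Ioc x z, |y| ≤ 1 := by
    intro y hy
    rw [abs_of_nonneg (hx.trans hy.1.le)]
    exact hy.2.trans hz
  have hGCj : ∀ j : ℕ, IntegrableOn (fun y => (g y - c) * y^j) (Set.Ioc x z) := by
    intro j
    apply intOn ((hgm.sub_const c).mul (measurable_id.pow_const j))
    intro y hy
    show |(g y - c) * y ^ j| ≤ _
    rw [abs_mul]
    refine mul_le_one₀ (hsub y hy) (abs_nonneg _) ?_
    rw [abs_pow]
    exact pow_le_one₀ (abs_nonneg _) (hyle y hy)
  have hGCx : ∀ j : ℕ, IntegrableOn (fun y => (g y - c) * (y - x)^j) (Set.Ioc x z) := by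
    intro j
    apply intOn ((hgm.sub_const c).mul ((measurable_id.sub_const x).pow_const j))
    intro y hy
    show |(g y - c) * (id y - x) ^ j| ≤ _
    rw [abs_mul]
    refine mul_le_one₀ (hsub y hy) (abs_nonneg _) ?_
    rw [abs_pow]
    refine pow_le_one₀ (abs_nonneg _) ?_
    simp only [id_eq]
    rw [abs_of_nonneg (by linarith [hy.1] : (0:ℝ) ≤ y - x)]
    linarith [hy.2]
  -- uniform moments
  have hB : ∀ k : ℕ, ∫ y in Set.Ioc x z, (y - x)^k = (z-x)^(k+1)/((k:ℝ)+1) := by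
    intro k
    rw [← intervalIntegral.integral_of_le hxz.le,
      intervalIntegral.integral_comp_sub_right (fun u => u^k) x]
    simp [integral_pow]
  have hC : ∀ k : ℕ, ∫ y in Set.Ioc x z, (g y - c) * (y - x)^k = 0 := by
    intro k
    have hsplit : ∀ y : ℝ, (g y - c) * (y - x)^k
        = p x y * p y z * (y-x)^k - c * (y-x)^k := fun y => by simp [hg]; ring
    rw [setIntegral_congr_fun measurableSet_Ioc (fun y _ => hsplit y),
      integral_sub (pmint p hmeas hrange hx hz hxz.le k)
        (Continuous.integrableOn_Ioc (f := fun y : ℝ => c * (y - x)^k) (by fun_prop)),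
      moments p hmeas hrange heq k x z hx hxz hz, integral_const_mul, hB]
    ring
  have hD : ∀ k : ℕ, ∫ y in Set.Ioc x z, (g y - c) * y^k = 0 := by
    intro k
    have hexp : ∀ y : ℝ, (g y - c) * y^k
        = ∑ j ∈ Finset.range (k+1),
            ((g y - c) * (y-x)^j) * (x^(k-j) * (k.choose j : ℝ)) := by
      intro y
      have : y^k = ((y-x)+x)^k := by ring
      rw [this, add_pow, Finset.mul_sum]
      exact Finset.sum_congr rfl fun j _ => by ring
    rw [setIntegral_congr_fun measurableSet_Ioc (fun y _ => hexp y)]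
    rw [integral_finset_sum _ (fun j _ => (hGCx j).mul_const _)]
    refine Finset.sum_eq_zero fun j _ => ?_
    rw [integral_mul_const, hC j, zero_mul]
  set D : ℝ → ℝ := Set.indicator (Set.Ioc x z) (fun y => g y - c) with hDdef
  have hDm : Measurable D := (hgm.sub_const c).indicator measurableSet_Ioc
  have hDbd : ∀ y, |D y| ≤ 1 := by
    intro y
    by_cases h : y ∈ Set.Ioc x z
    · rw [hDdef, Set.indicator_of_mem h]; exact hsub y h
    · rw [hDdef, Set.indicator_of_notMem h]; simp
  have hDint : Integrable D volume :=
    IntegrableOn.integrable_indicator (intOn (hgm.sub_const c) hsub) measurableSet_Ioc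
  have hmulrepr : ∀ φ : ℝ → ℝ, (fun y => D y * φ y)
      = Set.indicator (Set.Ioc x z) (fun y => (g y - c) * φ y) := by
    intro φ
    funext y
    by_cases h : y ∈ Set.Ioc x z
    · rw [hDdef, Set.indicator_of_mem h, Set.indicator_of_mem h]
    · rw [hDdef, Set.indicator_of_notMem h, Set.indicator_of_notMem h, zero_mul]
  have hmulint : ∀ φ : ℝ → ℝ, Continuous φ → Integrable (fun y => D y * φ y) volume := by
    intro φ hφ
    rw [hmulrepr φ]
    refine IntegrableOn.integrable_indicator ?_ measurableSet_Ioc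
    obtain ⟨M, hM⟩ := isCompact_Icc.exists_bound_of_continuousOn
      (s := Set.Icc x z) hφ.continuousOn
    refine intOn ((hgm.sub_const c).mul hφ.measurable) (C := M) ?_
    intro y hy
    show |(g y - c) * φ y| ≤ M
    rw [abs_mul]
    have hMy : |φ y| ≤ M := by
      have := hM y (Set.Ioc_subset_Icc_self hy)
      rwa [Real.norm_eq_abs] at this
    calc |g y - c| * |φ y| ≤ 1 * M :=
      mul_le_mul (hsub y hy) hMy (abs_nonneg _) zero_le_one
    _ = M := one_mul M
  have hpoly : ∀ q : Polynomial ℝ, ∫ y in Set.Ioc x z, (g y - c) * q.eval y = 0 := by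
    intro q
    have hexp : ∀ y : ℝ, (g y - c) * q.eval y
        = ∑ j ∈ Finset.range (q.natDegree + 1), ((g y - c) * y^j) * q.coeff j := by
      intro y
      rw [Polynomial.eval_eq_sum_range, Finset.mul_sum]
      exact Finset.sum_congr rfl fun j _ => by ring
    rw [setIntegral_congr_fun measurableSet_Ioc (fun y _ => hexp y),
      integral_finset_sum _ (fun j _ => (hGCj j).mul_const _)]
    refine Finset.sum_eq_zero fun j _ => ?_
    rw [integral_mul_const, hD j, zero_mul]
  have hW : ∀ φ : ℝ → ℝ, Continuous φ → ∀ ε > 0, ∃ q : Polynomial ℝ,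
      ∀ y ∈ Set.Icc x z, |φ y - q.eval y| ≤ ε := by
    intro φ hφ ε hε
    set φ' : C(Set.Icc x z, ℝ) := ⟨fun y => φ y, hφ.comp continuous_subtype_val⟩ with hφ'
    have hmem : φ' ∈ closure ((polynomialFunctions (Set.Icc x z)) : Set C(Set.Icc x z, ℝ)) := by
      rw [← Subalgebra.topologicalClosure_coe, polynomialFunctions_closure_eq_top]
      exact Set.mem_univ _
    obtain ⟨q', hq'mem, hq'dist⟩ := Metric.mem_closure_iff.mp hmem ε hε
    rw [polynomialFunctions_coe] at hq'mem
    obtain ⟨q, rfl⟩ := hq'mem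
    refine ⟨q, fun y hy => ?_⟩
    have h1 : dist (φ' ⟨y, hy⟩) ((Polynomial.toContinuousMapOnAlgHom (Set.Icc x z) q) ⟨y, hy⟩)
        ≤ dist φ' (Polynomial.toContinuousMapOnAlgHom (Set.Icc x z) q) :=
      ContinuousMap.dist_apply_le_dist _
    have h2 : (Polynomial.toContinuousMapOnAlgHom (Set.Icc x z) q) ⟨y, hy⟩ = q.eval y := by
      simp [Polynomial.toContinuousMapOnAlgHom_apply, Polynomial.toContinuousMapOn_apply,
        Polynomial.toContinuousMap_apply]
    rw [h2] at h1
    have h3 : φ' ⟨y, hy⟩ = φ y := rfl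
    rw [h3] at h1
    rw [← Real.dist_eq]
    exact h1.trans hq'dist.le
  have hContInt : ∀ φ : ℝ → ℝ, Continuous φ →
      IntegrableOn (fun y => (g y - c) * φ y) (Set.Ioc x z) := by
    intro φ hφ
    obtain ⟨M, hM⟩ := isCompact_Icc.exists_bound_of_continuousOn
      (s := Set.Icc x z) hφ.continuousOn
    refine intOn ((hgm.sub_const c).mul hφ.measurable) (C := M) ?_
    intro y hy
    show |(g y - c) * φ y| ≤ M
    rw [abs_mul]
    have hMy : |φ y| ≤ M := by
      have := hM y (Set.Ioc_subset_Icc_self hy)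
      rwa [Real.norm_eq_abs] at this
    calc |g y - c| * |φ y| ≤ 1 * M :=
      mul_le_mul (hsub y hy) hMy (abs_nonneg _) zero_le_one
    _ = M := one_mul M
  have hvolR : (volume (Set.Ioc x z)).toReal = z - x := by
    rw [Real.volume_Ioc, ENNReal.toReal_ofReal (by linarith)]
  have hCont : ∀ φ : ℝ → ℝ, Continuous φ → ∫ y, D y * φ y = 0 := by
    intro φ hφ
    have key : ∀ ε > (0:ℝ), |∫ y, D y * φ y| ≤ ε * (z - x) := by
      intro ε hε
      obtain ⟨q, hq⟩ := hW φ hφ ε hε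
      have hrepr : ∫ y, D y * φ y = ∫ y in Set.Ioc x z, (g y - c) * φ y := by
        rw [hmulrepr φ, integral_indicator measurableSet_Ioc]
      have hsplitfun : ∀ y : ℝ, (g y - c) * φ y
          = (g y - c) * q.eval y + (g y - c) * (φ y - q.eval y) := fun y => by ring
      have hint2 : IntegrableOn (fun y => (g y - c) * (φ y - q.eval y)) (Set.Ioc x z) :=
        hContInt _ (hφ.sub q.continuous)
      rw [hrepr, setIntegral_congr_fun measurableSet_Ioc (fun y _ => hsplitfun y),
        integral_add (hContInt _ q.continuous) hint2, hpoly q, zero_add]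
      have hb : ∀ y ∈ Set.Ioc x z, ‖(g y - c) * (φ y - q.eval y)‖ ≤ ε := by
        intro y hy
        rw [Real.norm_eq_abs, abs_mul]
        calc |g y - c| * |φ y - q.eval y| ≤ 1 * ε :=
          mul_le_mul (hsub y hy) (hq y (Set.Ioc_subset_Icc_self hy)) (abs_nonneg _) zero_le_one
        _ = ε := one_mul ε
      have := norm_setIntegral_le_of_norm_le_const
        (by rw [Real.volume_Ioc]; exact ENNReal.ofReal_lt_top) hb
      rwa [Real.norm_eq_abs, measureReal_def, hvolR] at this
    by_contra habs
    have h0 : 0 < |∫ y, D y * φ y| := abs_pos.2 habs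
    have hzx : 0 < z - x := by linarith
    have := key (|∫ y, D y * φ y| / (2 * (z - x))) (by positivity)
    rw [div_mul_eq_mul_div, mul_comm] at this
    have h2 : (z - x) * |∫ y, D y * φ y| / (2 * (z - x)) = |∫ y, D y * φ y| / 2 := by
      field_simp
    rw [h2] at this
    linarith
  have hD2int : Integrable (fun y => D y * D y) volume := by
    apply Integrable.mono' hDint.abs (hDm.mul hDm).aestronglyMeasurable
    refine Filter.Eventually.of_forall fun y => ?_
    show ‖D y * D y‖ ≤ _
    rw [Real.norm_eq_abs, abs_mul]
    calc |D y| * |D y| ≤ 1 * |D y| := mul_le_mul_of_nonneg_right (hDbd y) (abs_nonneg _)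
    _ = |D y| := one_mul _
  have hD2zero : ∫ y, D y * D y = 0 := by
    have key : ∀ ε > (0:ℝ), ∫ y, D y * D y ≤ ε := by
      intro ε hε
      obtain ⟨φ, hφsupp, hφdist, hφcont, hφint⟩ :=
        hDint.exists_hasCompactSupport_integral_sub_le hε
      simp only [Real.norm_eq_abs] at hφdist
      have hint1 : Integrable (fun y => D y * (D y - φ y)) volume := by
        apply Integrable.mono' (hDint.sub hφint).abs
          ((hDm.mul (hDm.sub hφcont.measurable)).aestronglyMeasurable)
        refine Filter.Eventually.of_forall fun y => ?_
        show ‖D y * (D y - φ y)‖ ≤ _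
        rw [Real.norm_eq_abs, abs_mul]
        calc |D y| * |D y - φ y| ≤ 1 * |D y - φ y| :=
          mul_le_mul_of_nonneg_right (hDbd y) (abs_nonneg _)
        _ = |D y - φ y| := one_mul _
      have hsplit : (fun y => D y * D y)
          = fun y => D y * (D y - φ y) + D y * φ y := by funext y; ring
      rw [hsplit, integral_add hint1 (hmulint φ hφcont), hCont φ hφcont, add_zero]
      have hmono : ∫ y, D y * (D y - φ y) ≤ ∫ y, |D y - φ y| := by
        apply integral_mono hint1 (hDint.sub hφint).abs
        intro y
        calc D y * (D y - φ y) ≤ |D y * (D y - φ y)| := le_abs_self _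
        _ = |D y| * |D y - φ y| := abs_mul _ _
        _ ≤ 1 * |D y - φ y| := mul_le_mul_of_nonneg_right (hDbd y) (abs_nonneg _)
        _ = |D y - φ y| := one_mul _
      exact hmono.trans hφdist
    have hnn : 0 ≤ ∫ y, D y * D y := integral_nonneg fun y => mul_self_nonneg _
    by_contra habs
    have h0 : 0 < ∫ y, D y * D y := lt_of_le_of_ne hnn (Ne.symm habs)
    have := key ((∫ y, D y * D y) / 2) (by positivity)
    linarith
  have hae : ∀ᵐ y : ℝ ∂volume, D y * D y = 0 := by
    have := (integral_eq_zero_iff_of_nonneg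
      (fun y => mul_self_nonneg (D y)) hD2int).mp hD2zero
    filter_upwards [this] with y hy
    simpa using hy
  filter_upwards [hae] with y hy hymem
  have hD0 : D y = 0 := mul_self_eq_zero.mp hy
  rw [hDdef, Set.indicator_of_mem hymem] at hD0
  have h2 := hrange y z (hx.trans hymem.1.le) hymem.2 hz
  have h1 := hrange x y hx hymem.1.le (hymem.2.trans hz)
  have hgyc : p x y * p y z = p x z := by
    have : g y = c := by linarith
    simpa [hg, hcdef] using this
  calc p x z = p x y * p y z := hgyc.symm
  _ ≤ p x y * 1 := mul_le_mul_of_nonneg_left h2.2 h1.1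
  _ = p x y := mul_one _

include hmeas hrange heq in
theorem stmt17'' :
    ∀ᵐ q : ℝ × ℝ × ℝ ∂(MeasureTheory.volume : Measure (ℝ × ℝ × ℝ)),
      (0 ≤ q.1 ∧ q.1 ≤ q.2.1 ∧ q.2.1 ≤ q.2.2 ∧ q.2.2 ≤ 1) →
        p q.1 q.2.2 ≤ p q.1 q.2.1 := by
  set Bad : Set (ℝ × ℝ × ℝ) :=
    {q | (0 ≤ q.1 ∧ q.1 ≤ q.2.1 ∧ q.2.1 ≤ q.2.2 ∧ q.2.2 ≤ 1) ∧
      p q.1 q.2.1 < p q.1 q.2.2} with hBad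
  have hm1 : Measurable fun q : ℝ × ℝ × ℝ => p q.1 q.2.1 :=
    hmeas.comp (measurable_fst.prodMk (measurable_fst.comp measurable_snd))
  have hm2 : Measurable fun q : ℝ × ℝ × ℝ => p q.1 q.2.2 :=
    hmeas.comp (measurable_fst.prodMk (measurable_snd.comp measurable_snd))
  have hBadm : MeasurableSet Bad := by
    apply MeasurableSet.inter
    · refine MeasurableSet.inter (measurableSet_le measurable_const measurable_fst) ?_
      refine MeasurableSet.inter
        (measurableSet_le measurable_fst (measurable_fst.comp measurable_snd)) ?_
      exact MeasurableSet.inter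
        (measurableSet_le (measurable_fst.comp measurable_snd)
          (measurable_snd.comp measurable_snd))
        (measurableSet_le (measurable_snd.comp measurable_snd) measurable_const)
    · exact measurableSet_lt hm1 hm2
  -- per-slice nullity
  have hslice : ∀ x zz : ℝ, volume {y : ℝ | (x, (y, zz)) ∈ Bad} = 0 := by
    intro x zz
    by_cases h : 0 ≤ x ∧ x < zz ∧ zz ≤ 1
    · have hT := pair_ae p hmeas hrange heq h.1 h.2.1 h.2.2
      rw [ae_iff] at hT
      refine measure_mono_null (fun y hy => ?_) (measure_union_null (measure_singleton x) hT)
      simp only [hBad, Set.mem_setOf_eq] at hy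
      rcases eq_or_lt_of_le hy.1.2.1 with he | hlt
      · exact Or.inl (by simp [← he])
      · exact Or.inr (by
          simp only [Set.mem_setOf_eq]
          exact fun hc => absurd (hc ⟨hlt, hy.1.2.2.1⟩) (not_le.2 hy.2))
    · refine measure_mono_null (fun y hy => ?_) (measure_singleton x)
      simp only [hBad, Set.mem_setOf_eq] at hy
      push_neg at h
      have hzx : zz ≤ x := by
        by_contra hc
        push_neg at hc
        exact absurd (h hy.1.1 hc) (not_lt.2 hy.1.2.2.2)
      have : y = x := le_antisymm (hy.1.2.2.1.trans hzx) hy.1.2.1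
      simp [this]
  have hnull : (volume : Measure (ℝ × ℝ × ℝ)) Bad = 0 := by
    rw [Measure.volume_eq_prod, Measure.measure_prod_null hBadm]
    refine Filter.Eventually.of_forall fun x => ?_
    have hSxm : MeasurableSet (Prod.mk x ⁻¹' Bad) := measurable_prodMk_left hBadm
    show (volume : Measure (ℝ × ℝ)) (Prod.mk x ⁻¹' Bad) = 0
    rw [Measure.volume_eq_prod, ← Measure.prod_swap,
      Measure.map_apply measurable_swap hSxm,
      Measure.measure_prod_null (measurable_swap hSxm)]
    refine Filter.Eventually.of_forall fun zz => ?_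
    have : (Prod.mk zz ⁻¹' (Prod.swap ⁻¹' (Prod.mk x ⁻¹' Bad)))
        = {y : ℝ | (x, (y, zz)) ∈ Bad} := rfl
    show volume (Prod.mk zz ⁻¹' (Prod.swap ⁻¹' (Prod.mk x ⁻¹' Bad))) = (0 : ℝ → ENNReal) zz
    rw [this]
    simpa using hslice x zz
  rw [ae_iff]
  refine measure_mono_null (fun q hq => ?_) hnull
  simp only [Set.mem_setOf_eq, Classical.not_imp] at hq
  exact ⟨hq.1, not_le.1 hq.2⟩

end main

/-- Lemma: a measurable `p : {(x,y) : 0 ≤ x ≤ y ≤ 1} → [0,1]` satisfying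
`p(x,y) = (1/(y−x)) ∫_x^y p(x,t) p(t,y) dt` is decreasing in `y` almost everywhere. -/
theorem stmt17 (p : ℝ → ℝ → ℝ) (hmeas : Measurable (Function.uncurry p))
    (hrange : ∀ x y : ℝ, 0 ≤ x → x ≤ y → y ≤ 1 → p x y ∈ Set.Icc (0:ℝ) 1)
    (heq : ∀ x y : ℝ, 0 ≤ x → x < y → y ≤ 1 →
      p x y = (1 / (y - x)) * ∫ t in x..y, p x t * p t y) :
    ∀ᵐ q : ℝ × ℝ × ℝ ∂(MeasureTheory.volume : Measure (ℝ × ℝ × ℝ)),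
      (0 ≤ q.1 ∧ q.1 ≤ q.2.1 ∧ q.2.1 ≤ q.2.2 ∧ q.2.2 ≤ 1) →
        p q.1 q.2.2 ≤ p q.1 q.2.1 :=
  stmt17'' p hmeas hrange heq
end

section
/- Let p be a Lebesgue-measurable function on {(x,y) : 0 ≤ x ≤ y ≤ 1} with values in [0,1] satisfying p(x,y) = (1/(y−x)) ∫_x^y p(x,t)·p(t,y) dt for all 0 ≤ x < y ≤ 1. Then for almost every triple (x,y,z) ∈ [0,1]³ with x ≤ y ≤ z, p(x,z) = p(x,y)·p(y,z). -/
open MeasureTheory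

open MeasureTheory Set Filter Metric intervalIntegral

lemma myIntegrableOn {f : ℝ → ℝ} {s : Set ℝ} (hs : MeasurableSet s)
    (hfin : volume s < ⊤) (hm : Measurable f) {C : ℝ}
    (hb : ∀ t ∈ s, |f t| ≤ C) : IntegrableOn f s volume := by
  refine Integrable.mono' (g := fun _ => C) (integrableOn_const hfin.ne)
    hm.aestronglyMeasurable.restrict ?_
  rw [ae_restrict_iff' hs]
  exact ae_of_all _ (by intro t ht; simpa using hb t ht)

lemma ae_zero_of_moments {a b : ℝ} (hab : a < b) {h : ℝ → ℝ}
    (hm : Measurable h) {C : ℝ} (hb : ∀ t ∈ Set.Ioc a b, |h t| ≤ C)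
    (hmom : ∀ k : ℕ, ∫ t in Set.Ioc a b, t ^ k * h t = 0) :
    ∀ᵐ t ∂(volume.restrict (Set.Ioc a b)), h t = 0 := by
  have hC : 0 ≤ C := le_trans (abs_nonneg _) (hb b ⟨hab, le_refl b⟩)
  -- integrability of g * h for bounded measurable g
  have hint : ∀ (g : ℝ → ℝ) (D : ℝ), Measurable g → (∀ t ∈ Set.Ioc a b, |g t| ≤ D) →
      IntegrableOn (fun t => g t * h t) (Set.Ioc a b) volume := by
    intro g D hgm hgb
    have hD : 0 ≤ D := le_trans (abs_nonneg _) (hgb b ⟨hab, le_refl b⟩)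
    refine myIntegrableOn measurableSet_Ioc measure_Ioc_lt_top (hgm.mul hm) (C := D * C) ?_
    intro t ht
    rw [abs_mul]
    exact mul_le_mul (hgb t ht) (hb t ht) (abs_nonneg _) hD
  have hint' : ∀ (g : ℝ → ℝ), Continuous g →
      IntegrableOn (fun t => g t * h t) (Set.Ioc a b) volume := by
    intro g hg
    obtain ⟨D, hD⟩ := (isCompact_Icc (a := a) (b := b)).exists_bound_of_continuousOn
      hg.continuousOn
    exact hint g D hg.measurable (fun t ht => by simpa using hD t (Ioc_subset_Icc_self ht))
  -- polynomials
  have hpoly : ∀ q : Polynomial ℝ, ∫ t in Set.Ioc a b, q.eval t * h t = 0 := by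
    intro q
    induction q using Polynomial.induction_on with
    | C c =>
      have : (fun t => (Polynomial.C c).eval t * h t) = fun t => c * (t ^ 0 * h t) := by
        funext t; simp
      rw [this, MeasureTheory.integral_const_mul, hmom 0, mul_zero]
    | add q r hq hr =>
      have : (fun t => (q + r).eval t * h t)
          = fun t => q.eval t * h t + r.eval t * h t := by
        funext t; simp [add_mul]
      rw [this, integral_add (hint' _ q.continuous) (hint' _ r.continuous), hq, hr,
        add_zero]
    | monomial n c _ =>
      have : (fun t => (Polynomial.C c * Polynomial.X ^ (n + 1)).eval t * h t)
          = fun t => c * (t ^ (n + 1) * h t) := by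
        funext t; simp [mul_assoc]
      rw [this, MeasureTheory.integral_const_mul, hmom (n + 1), mul_zero]
  -- continuous functions
  have hcont : ∀ g : C(ℝ, ℝ), ∫ t in Set.Ioc a b, g t * h t = 0 := by
    intro g
    set I : ℝ := ∫ t in Set.Ioc a b, g t * h t with hI
    have key : ∀ ε : ℝ, 0 < ε → |I| ≤ ε * (C * (b - a)) := by
      intro ε hε
      have htop := polynomialFunctions_closure_eq_top a b
      have hmem : (g.restrict (Set.Icc a b)) ∈
          (polynomialFunctions (Set.Icc a b)).topologicalClosure := by
        rw [htop]; trivial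
      rw [← SetLike.mem_coe, Subalgebra.topologicalClosure_coe] at hmem
      rw [Metric.mem_closure_iff] at hmem
      obtain ⟨q, hq, hdist⟩ := hmem ε hε
      rw [SetLike.mem_coe, polynomialFunctions, Subalgebra.mem_map] at hq
      obtain ⟨P, -, hP⟩ := hq
      have hPeval : ∀ t (ht : t ∈ Set.Icc a b), |g t - P.eval t| ≤ ε := by
        intro t ht
        calc |g t - P.eval t| = dist (g t) (P.eval t) := by rw [Real.dist_eq]
        _ ≤ dist (g.restrict (Set.Icc a b) ⟨t, ht⟩) (q ⟨t, ht⟩) := by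
            rw [← hP]
            simp only [ContinuousMap.restrict_apply, Polynomial.toContinuousMapOnAlgHom_apply,
              Polynomial.toContinuousMapOn_apply, Polynomial.toContinuousMap_apply]
            exact le_rfl
        _ ≤ dist (g.restrict (Set.Icc a b)) q := ContinuousMap.dist_apply_le_dist _
        _ ≤ ε := le_of_lt hdist
      have hsplit : I = ∫ t in Set.Ioc a b, (g t - P.eval t) * h t := by
        rw [hI]
        have : (fun t => (g t - P.eval t) * h t)
            = fun t => g t * h t - P.eval t * h t := by funext t; ring
        rw [this, integral_sub (hint' g g.continuous) (hint' _ P.continuous), hpoly P, sub_zero]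
      rw [hsplit]
      have := norm_setIntegral_le_of_norm_le_const_ae' (μ := volume)
        (s := Set.Ioc a b) (f := fun t => (g t - P.eval t) * h t) (C := ε * C)
        measure_Ioc_lt_top (ae_of_all _ ?_)
      · calc |∫ t in Set.Ioc a b, (g t - P.eval t) * h t| ≤ ε * C * (volume (Set.Ioc a b)).toReal := this
        _ = ε * (C * (b - a)) := by rw [Real.volume_Ioc, ENNReal.toReal_ofReal (by linarith)]; ring
      · intro t ht
        rw [Real.norm_eq_abs, abs_mul]
        exact mul_le_mul (hPeval t (Set.Ioc_subset_Icc_self ht)) (hb t ht) (abs_nonneg _) (le_of_lt hε)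
    have : |I| ≤ 0 := by
      by_contra hcon
      push_neg at hcon
      have h2 : 0 < C * (b - a) + 1 := by nlinarith
      have hk := key (|I| / (2 * (C * (b - a) + 1))) (by positivity)
      have hle : C * (b - a) ≤ C * (b - a) + 1 := by linarith
      have h3 : |I| / (2 * (C * (b - a) + 1)) * (C * (b - a))
          ≤ |I| / (2 * (C * (b - a) + 1)) * (C * (b - a) + 1) :=
        mul_le_mul_of_nonneg_left hle (by positivity)
      have h4 : |I| / (2 * (C * (b - a) + 1)) * (C * (b - a) + 1) = |I| / 2 := by
        field_simp
      linarith
    have : I = 0 := by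
      have := abs_nonneg I
      have : |I| = 0 := le_antisymm ‹|I| ≤ 0› ‹0 ≤ |I|›
      exact abs_eq_zero.mp this
    exact this
  -- integrals over subintervals vanish
  have hsub : ∀ c d : ℝ, ∫ t in Set.Ioc a b ∩ Set.Icc c d, h t = 0 := by
    intro c d
    rcases le_or_gt c d with hcd | hcd
    swap
    · rw [Set.Icc_eq_empty (not_le.2 hcd), Set.inter_empty]
      simp
    set g : ℕ → ℝ → ℝ := fun n t => max (1 - (n : ℝ) * Metric.infDist t (Set.Icc c d)) 0 with hg
    have hgc : ∀ n, Continuous (g n) :=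
      fun n => ((continuous_const.sub (continuous_const.mul
        (continuous_infDist_pt (Set.Icc c d)))).max continuous_const)
    have hg01 : ∀ n t, 0 ≤ g n t ∧ g n t ≤ 1 := by
      intro n t
      refine ⟨le_max_right _ _, max_le ?_ zero_le_one⟩
      have : 0 ≤ (n:ℝ) * Metric.infDist t (Set.Icc c d) :=
        mul_nonneg (Nat.cast_nonneg n) Metric.infDist_nonneg
      linarith
    have hglim : ∀ t, Filter.Tendsto (fun n => g n t) Filter.atTop
        (nhds (Set.indicator (Set.Icc c d) (fun _ => (1:ℝ)) t)) := by
      intro t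
      by_cases ht : t ∈ Set.Icc c d
      · have hgn1 : ∀ n, g n t = 1 := by
          intro n
          rw [hg]
          simp [Metric.infDist_zero_of_mem ht]
        rw [Set.indicator_of_mem ht]
        simp only [hgn1]
        exact tendsto_const_nhds
      · have hpos : 0 < Metric.infDist t (Set.Icc c d) :=
          (IsClosed.notMem_iff_infDist_pos isClosed_Icc (Set.nonempty_Icc.2 hcd)).1 ht
        rw [Set.indicator_of_notMem ht]
        have hev : ∀ᶠ n in Filter.atTop, g n t = 0 := by
          obtain ⟨N, hN⟩ := exists_nat_gt (1 / Metric.infDist t (Set.Icc c d))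
          filter_upwards [Filter.eventually_ge_atTop N] with n hn
          rw [hg]
          simp only
          rw [max_eq_right]
          have h5 : 1 / Metric.infDist t (Set.Icc c d) < (n:ℝ) :=
            lt_of_lt_of_le hN (by exact_mod_cast hn)
          rw [div_lt_iff₀ hpos] at h5
          nlinarith
        exact Filter.Tendsto.congr' (hev.mono fun n hn => hn.symm) tendsto_const_nhds
    have hdct := MeasureTheory.tendsto_integral_of_dominated_convergence
      (μ := volume.restrict (Set.Ioc a b))
      (F := fun n t => g n t * h t)
      (f := fun t => Set.indicator (Set.Icc c d) (fun _ => (1:ℝ)) t * h t)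
      (bound := fun _ => C)
      (fun n => ((hgc n).measurable.mul hm).aestronglyMeasurable)
      ((integrableOn_const measure_Ioc_lt_top.ne))
      ?_ ?_
    · have hlim0 : Filter.Tendsto (fun n => ∫ t in Set.Ioc a b, g n t * h t)
          Filter.atTop (nhds 0) := by
        have : ∀ n, ∫ t in Set.Ioc a b, g n t * h t = 0 :=
          fun n => hcont (ContinuousMap.mk (g n) (hgc n))
        simp only [this]
        exact tendsto_const_nhds
      have heq0 : ∫ t in Set.Ioc a b,
          Set.indicator (Set.Icc c d) (fun _ => (1:ℝ)) t * h t = 0 :=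
        tendsto_nhds_unique hdct hlim0
      have : (fun t => Set.indicator (Set.Icc c d) (fun _ => (1:ℝ)) t * h t)
          = Set.indicator (Set.Icc c d) h := by
        funext t
        by_cases ht : t ∈ Set.Icc c d <;>
          simp [Set.indicator_of_mem, Set.indicator_of_notMem, ht]
      rw [this, MeasureTheory.setIntegral_indicator measurableSet_Icc] at heq0
      exact heq0
    · intro n
      rw [ae_restrict_iff' measurableSet_Ioc]
      refine ae_of_all _ fun t ht => ?_
      rw [Real.norm_eq_abs, abs_mul]
      calc |g n t| * |h t| ≤ 1 * C := by
            refine mul_le_mul ?_ (hb t ht) (abs_nonneg _) zero_le_one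
            rw [abs_of_nonneg (hg01 n t).1]
            exact (hg01 n t).2
      _ = C := one_mul C
    · exact ae_of_all _ fun t => (hglim t).mul_const (h t)
  -- Lebesgue differentiation
  have hIOn : IntegrableOn h (Set.Ioc a b) volume :=
    myIntegrableOn measurableSet_Ioc measure_Ioc_lt_top hm hb
  have hloc : MeasureTheory.LocallyIntegrable ((Set.Ioc a b).indicator h) volume :=
    (hIOn.integrable_indicator measurableSet_Ioc).locallyIntegrable
  have hleb := IsUnifLocDoublingMeasure.ae_tendsto_average (μ := (volume : Measure ℝ)) hloc 1
  have hzero : ∀ᵐ x ∂(volume : Measure ℝ), (Set.Ioc a b).indicator h x = 0 := by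
    filter_upwards [hleb] with x hx
    have hev : ∀ᶠ r in nhdsWithin (0:ℝ) (Set.Ioi 0),
        x ∈ Metric.closedBall ((fun _ : ℝ => x) r) (1 * r) := by
      filter_upwards [self_mem_nhdsWithin] with r hr
      rw [one_mul]
      exact Metric.mem_closedBall_self (le_of_lt hr)
    have hx2 := hx (fun _ : ℝ => x) id tendsto_id hev
    have havg : ∀ᶠ r in nhdsWithin (0:ℝ) (Set.Ioi 0),
        (⨍ y in Metric.closedBall x r, (Set.Ioc a b).indicator h y ∂volume) = 0 := by
      filter_upwards [self_mem_nhdsWithin] with r hr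
      rw [MeasureTheory.setAverage_eq, MeasureTheory.setIntegral_indicator measurableSet_Ioc,
        Real.closedBall_eq_Icc, Set.inter_comm, hsub (x - r) (x + r), smul_zero]
    have : Filter.Tendsto (fun r : ℝ => ⨍ y in Metric.closedBall x r,
        (Set.Ioc a b).indicator h y ∂volume) (nhdsWithin (0:ℝ) (Set.Ioi 0)) (nhds 0) :=
      Filter.Tendsto.congr' (havg.mono fun r hr => hr.symm) tendsto_const_nhds
    exact (tendsto_nhds_unique hx2 this)
  have hres : ∀ᵐ t ∂(volume.restrict (Set.Ioc a b)), (Set.Ioc a b).indicator h t = 0 :=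
    ae_restrict_of_ae hzero
  filter_upwards [hres, ae_restrict_mem measurableSet_Ioc] with t h1 h2
  rwa [Set.indicator_of_mem h2] at h1

section main

variable {p : ℝ → ℝ → ℝ}

lemma hbase (heq : ∀ x y : ℝ, 0 ≤ x → x < y → y ≤ 1 →
      p x y = (1 / (y - x)) * ∫ t in x..y, p x t * p t y) :
    ∀ u v : ℝ, 0 ≤ u → u < v → v ≤ 1 →
      ∫ t in Set.Ioc u v, p u t * p t v = (v - u) * p u v := by
  intro u v h0 huv h1
  have h := heq u v h0 huv h1
  rw [intervalIntegral.integral_of_le (le_of_lt huv)] at h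
  have hne : v - u ≠ 0 := sub_ne_zero.2 (ne_of_gt huv)
  rw [h]
  field_simp

lemma Mk (hmeas : Measurable (Function.uncurry p))
    (hrange : ∀ x y : ℝ, 0 ≤ x → x ≤ y → y ≤ 1 → p x y ∈ Set.Icc (0:ℝ) 1)
    (heq : ∀ x y : ℝ, 0 ≤ x → x < y → y ≤ 1 →
      p x y = (1 / (y - x)) * ∫ t in x..y, p x t * p t y) :
    ∀ (k : ℕ) (x z : ℝ), 0 ≤ x → x < z → z ≤ 1 →
      ∫ t in Set.Ioc x z, (t - x) ^ k * (p x t * p t z)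
        = (z - x) ^ (k + 1) * p x z / (k + 1) := by
  intro k
  induction k with
  | zero =>
    intro x z hx hxz hz
    simpa using hbase heq x z hx hxz hz
  | succ k ih =>
    intro x z hx hxz hz
    have hxz' := le_of_lt hxz
    have hz1 : z - x ≤ 1 := by linarith
    have hzx0 : (0:ℝ) ≤ z - x := by linarith
    set A := Set.Ioc x z with hA
    set Φ : ℝ → ℝ → ℝ := fun s t => ((s - x) ^ k * p x s) * (p s t * p t z) with hΦ
    set D : ℝ → ℝ → ℝ := fun s t => if s < t then Φ s t else 0 with hD
    haveI hfin : IsFiniteMeasure (volume.restrict A) :=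
      ⟨by rw [Measure.restrict_apply_univ]; exact measure_Ioc_lt_top⟩
    -- bound
    have hb1 : ∀ s ∈ A, ∀ t ∈ A, |D s t| ≤ 1 := by
      intro s hs t ht
      rw [hD]
      simp only
      by_cases hst : s < t
      · rw [if_pos hst, hΦ]
        simp only
        have hs1 : 0 ≤ s := le_trans hx (le_of_lt hs.1)
        have e1a : (0:ℝ) ≤ (s - x) ^ k := pow_nonneg (by linarith [hs.1]) k
        have e1b : (s - x) ^ k ≤ 1 := pow_le_one₀ (by linarith [hs.1]) (by linarith [hs.2])
        obtain ⟨e2a, e2b⟩ := Set.mem_Icc.1 (hrange x s hx (le_of_lt hs.1) (le_trans hs.2 hz))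
        obtain ⟨e3a, e3b⟩ := Set.mem_Icc.1 (hrange s t hs1 (le_of_lt hst) (le_trans ht.2 hz))
        obtain ⟨e4a, e4b⟩ := Set.mem_Icc.1
          (hrange t z (le_trans hx (le_of_lt ht.1)) ht.2 hz)
        have m1a : (0:ℝ) ≤ (s - x) ^ k * p x s := mul_nonneg e1a e2a
        have m1b : (s - x) ^ k * p x s ≤ 1 := mul_le_one₀ e1b e2a e2b
        have m2a : (0:ℝ) ≤ p s t * p t z := mul_nonneg e3a e4a
        have m2b : p s t * p t z ≤ 1 := mul_le_one₀ e3b e4a e4b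
        rw [abs_le]
        constructor
        · nlinarith
        · exact mul_le_one₀ m1b m2a m2b
      · rw [if_neg hst]
        simp
    -- measurability
    have hΦmeas : Measurable (fun q : ℝ × ℝ => Φ q.1 q.2) := by
      rw [hΦ]
      exact (((measurable_fst.sub measurable_const).pow_const k).mul
          (hmeas.comp (measurable_const.prodMk measurable_fst))).mul
        ((hmeas.comp (measurable_fst.prodMk measurable_snd)).mul
          (hmeas.comp (measurable_snd.prodMk measurable_const)))
    have hDmeas : Measurable (Function.uncurry D) := by
      have : Function.uncurry D = fun q : ℝ × ℝ => if q.1 < q.2 then Φ q.1 q.2 else 0 := rfl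
      rw [this]
      exact Measurable.ite (measurableSet_lt measurable_fst measurable_snd) hΦmeas
        measurable_const
    have hDint : Integrable (Function.uncurry D)
        ((volume.restrict A).prod (volume.restrict A)) := by
      refine Integrable.mono' (integrable_const 1) hDmeas.aestronglyMeasurable ?_
      rw [Measure.prod_restrict, ae_restrict_iff' (measurableSet_Ioc.prod measurableSet_Ioc)]
      refine ae_of_all _ fun q hq => ?_
      rw [Real.norm_eq_abs]
      exact hb1 q.1 hq.1 q.2 hq.2
    have hswap := MeasureTheory.integral_integral_swap hDint
    -- integrability of the moment integrands
    have hintk : ∀ j : ℕ, IntegrableOn (fun s => (s - x) ^ j * (p x s * p s z)) A volume := by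
      intro j
      refine myIntegrableOn measurableSet_Ioc measure_Ioc_lt_top ?_ (C := 1) ?_
      · exact ((measurable_id.sub measurable_const).pow_const j).mul
          ((hmeas.comp (measurable_const.prodMk measurable_id)).mul
            (hmeas.comp (measurable_id.prodMk measurable_const)))
      · intro s hs
        have e1a : (0:ℝ) ≤ (s - x) ^ j := pow_nonneg (by linarith [hs.1]) j
        have e1b : (s - x) ^ j ≤ 1 := pow_le_one₀ (by linarith [hs.1]) (by linarith [hs.2])
        obtain ⟨e2a, e2b⟩ := Set.mem_Icc.1 (hrange x s hx (le_of_lt hs.1) (le_trans hs.2 hz))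
        obtain ⟨e4a, e4b⟩ := Set.mem_Icc.1
          (hrange s z (le_trans hx (le_of_lt hs.1)) hs.2 hz)
        rw [abs_mul, abs_of_nonneg e1a, abs_of_nonneg (mul_nonneg e2a e4a)]
        exact mul_le_one₀ e1b (mul_nonneg e2a e4a) (mul_le_one₀ e2b e4a e4b)
    -- evaluate the left side of the swap
    have E1 : (∫ s in A, ∫ t in A, D s t) =
        ∫ s in A, ((s - x) ^ k * p x s) * ((z - s) * p s z) := by
      rw [hA, MeasureTheory.integral_Ioc_eq_integral_Ioo,
        MeasureTheory.integral_Ioc_eq_integral_Ioo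
          (f := fun s => ((s - x) ^ k * p x s) * ((z - s) * p s z))]
      refine MeasureTheory.setIntegral_congr_fun measurableSet_Ioo fun s hs => ?_
      have h1 : (fun t => D s t) = Set.indicator (Set.Ioi s) (fun t => Φ s t) := by
        funext t
        rw [Set.indicator_apply, hD]
        simp only [Set.mem_Ioi]
      rw [h1, MeasureTheory.setIntegral_indicator measurableSet_Ioi]
      have h2 : A ∩ Set.Ioi s = Set.Ioc s z := by
        rw [hA, Set.Ioc_inter_Ioi, sup_eq_right.2 (le_of_lt hs.1)]
      rw [h2, hΦ]
      simp only
      rw [MeasureTheory.integral_const_mul,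
        hbase heq s z (le_trans hx (le_of_lt hs.1)) hs.2 hz]
    -- evaluate the right side of the swap
    have E2 : (∫ t in A, ∫ s in A, D s t) =
        ∫ t in A, ((t - x) ^ (k + 1) * p x t / (k + 1)) * p t z := by
      refine MeasureTheory.setIntegral_congr_fun measurableSet_Ioc fun t ht => ?_
      have h1 : (fun s => D s t) = Set.indicator (Set.Iio t) (fun s => Φ s t) := by
        funext s
        rw [Set.indicator_apply, hD]
        simp only [Set.mem_Iio]
      rw [h1, MeasureTheory.setIntegral_indicator measurableSet_Iio]
      have h2 : A ∩ Set.Iio t = Set.Ioo x t := by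
        rw [hA]
        ext u
        simp only [Set.mem_inter_iff, Set.mem_Ioc, Set.mem_Iio, Set.mem_Ioo]
        constructor
        · rintro ⟨⟨h1, h2⟩, h3⟩
          exact ⟨h1, h3⟩
        · rintro ⟨h1, h3⟩
          exact ⟨⟨h1, le_trans (le_of_lt h3) ht.2⟩, h3⟩
      rw [h2, ← MeasureTheory.integral_Ioc_eq_integral_Ioo]
      have h3 : ∀ s, Φ s t = ((s - x) ^ k * (p x s * p s t)) * p t z := by
        intro s
        rw [hΦ]
        ring
      rw [show (fun s => Φ s t) = fun s => ((s - x) ^ k * (p x s * p s t)) * p t z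
          from funext h3]
      rw [MeasureTheory.integral_mul_const, ih x t hx ht.1 (le_trans ht.2 hz)]
    rw [E1, E2] at hswap
    -- decompose the left side
    have h4 : ∀ s : ℝ, ((s - x) ^ k * p x s) * ((z - s) * p s z)
        = (z - x) * ((s - x) ^ k * (p x s * p s z))
          - (s - x) ^ (k + 1) * (p x s * p s z) := by
      intro s
      ring
    rw [show (fun s => ((s - x) ^ k * p x s) * ((z - s) * p s z))
        = fun s => (z - x) * ((s - x) ^ k * (p x s * p s z))
          - (s - x) ^ (k + 1) * (p x s * p s z) from funext h4,
      MeasureTheory.integral_sub ((hintk k).const_mul (z - x)) (hintk (k + 1)),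
      MeasureTheory.integral_const_mul, ih x z hx hxz hz] at hswap
    -- simplify the right side
    have h5 : ∀ t : ℝ, ((t - x) ^ (k + 1) * p x t / (k + 1)) * p t z
        = (1 / ((k : ℝ) + 1)) * ((t - x) ^ (k + 1) * (p x t * p t z)) := by
      intro t
      ring
    rw [show (fun t => ((t - x) ^ (k + 1) * p x t / ((k : ℝ) + 1)) * p t z)
        = fun t => (1 / ((k : ℝ) + 1)) * ((t - x) ^ (k + 1) * (p x t * p t z))
        from funext h5, MeasureTheory.integral_const_mul] at hswap
    -- solve the linear equation
    set I := ∫ t in A, (t - x) ^ (k + 1) * (p x t * p t z) with hIdef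
    have hk1 : ((k : ℝ) + 1) ≠ 0 := by positivity
    have hk2 : ((k : ℝ) + 1 + 1) ≠ 0 := by positivity
    push_cast
    rw [eq_div_iff hk2]
    field_simp at hswap
    ring_nf at hswap ⊢
    linarith

end main

/-- Lemma: a measurable `p : {(x,y) : 0 ≤ x ≤ y ≤ 1} → [0,1]` satisfying
`p(x,y) = (1/(y−x)) ∫_x^y p(x,t) p(t,y) dt` is multiplicative almost everywhere:
`p(x,z) = p(x,y) p(y,z)` for almost every `x ≤ y ≤ z`. -/
theorem stmt18 (p : ℝ → ℝ → ℝ) (hmeas : Measurable (Function.uncurry p))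
    (hrange : ∀ x y : ℝ, 0 ≤ x → x ≤ y → y ≤ 1 → p x y ∈ Set.Icc (0:ℝ) 1)
    (heq : ∀ x y : ℝ, 0 ≤ x → x < y → y ≤ 1 →
      p x y = (1 / (y - x)) * ∫ t in x..y, p x t * p t y) :
    ∀ᵐ q : ℝ × ℝ × ℝ ∂(MeasureTheory.volume : Measure (ℝ × ℝ × ℝ)),
      (0 ≤ q.1 ∧ q.1 ≤ q.2.1 ∧ q.2.1 ≤ q.2.2 ∧ q.2.2 ≤ 1) →
        p q.1 q.2.2 = p q.1 q.2.1 * p q.2.1 q.2.2 := by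
  have hpl : ∀ x : ℝ, Measurable (fun t => p x t) :=
    fun x => hmeas.comp (measurable_const.prodMk measurable_id)
  have hpr : ∀ z : ℝ, Measurable (fun t => p t z) :=
    fun z => hmeas.comp (measurable_id.prodMk measurable_const)
  have hpm : ∀ x z : ℝ, Measurable (fun y => p x y * p y z) :=
    fun x z => (hpl x).mul (hpr z)
  -- the key pointwise-in-(x,z) statement
  have key : ∀ x z : ℝ, 0 ≤ x → x < z → z ≤ 1 →
      ∀ᵐ y ∂(volume.restrict (Set.Ioc x z)), p x y * p y z = p x z := by
    intro x z hx hxz hz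
    set h : ℝ → ℝ := fun t => p x t * p t z - p x z with hh
    have hhm : Measurable h := (hpm x z).sub measurable_const
    obtain ⟨hpz0, hpz1⟩ := Set.mem_Icc.1 (hrange x z hx (le_of_lt hxz) hz)
    have hbd : ∀ t ∈ Set.Ioc x z, |h t| ≤ 2 := by
      intro t ht
      obtain ⟨e2a, e2b⟩ := Set.mem_Icc.1 (hrange x t hx (le_of_lt ht.1) (le_trans ht.2 hz))
      obtain ⟨e3a, e3b⟩ := Set.mem_Icc.1
        (hrange t z (le_trans hx (le_of_lt ht.1)) ht.2 hz)
      rw [hh, abs_le]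
      constructor <;> simp only <;> nlinarith
    -- integrability helpers
    have int1 : ∀ j : ℕ, IntegrableOn (fun t => (t - x) ^ j * (p x t * p t z))
        (Set.Ioc x z) volume := by
      intro j
      refine myIntegrableOn measurableSet_Ioc measure_Ioc_lt_top
        (((measurable_id.sub measurable_const).pow_const j).mul (hpm x z)) (C := 1) ?_
      intro s hs
      have e1a : (0:ℝ) ≤ (s - x) ^ j := pow_nonneg (by linarith [hs.1]) j
      have e1b : (s - x) ^ j ≤ 1 := pow_le_one₀ (by linarith [hs.1]) (by linarith [hs.2])
      obtain ⟨e2a, e2b⟩ := Set.mem_Icc.1 (hrange x s hx (le_of_lt hs.1) (le_trans hs.2 hz))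
      obtain ⟨e4a, e4b⟩ := Set.mem_Icc.1
        (hrange s z (le_trans hx (le_of_lt hs.1)) hs.2 hz)
      rw [abs_mul, abs_of_nonneg e1a, abs_of_nonneg (mul_nonneg e2a e4a)]
      exact mul_le_one₀ e1b (mul_nonneg e2a e4a) (mul_le_one₀ e2b e4a e4b)
    have int2 : ∀ j : ℕ, IntegrableOn (fun t => (t - x) ^ j * p x z)
        (Set.Ioc x z) volume := by
      intro j
      refine myIntegrableOn measurableSet_Ioc measure_Ioc_lt_top
        (((measurable_id.sub measurable_const).pow_const j).mul measurable_const) (C := 1) ?_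
      intro s hs
      have e1a : (0:ℝ) ≤ (s - x) ^ j := pow_nonneg (by linarith [hs.1]) j
      have e1b : (s - x) ^ j ≤ 1 := pow_le_one₀ (by linarith [hs.1]) (by linarith [hs.2])
      rw [abs_mul, abs_of_nonneg e1a, abs_of_nonneg hpz0]
      exact mul_le_one₀ e1b hpz0 hpz1
    have intH : ∀ j : ℕ, IntegrableOn (fun t => (t - x) ^ j * h t)
        (Set.Ioc x z) volume := by
      intro j
      refine myIntegrableOn measurableSet_Ioc measure_Ioc_lt_top
        (((measurable_id.sub measurable_const).pow_const j).mul hhm) (C := 2) ?_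
      intro s hs
      have e1a : (0:ℝ) ≤ (s - x) ^ j := pow_nonneg (by linarith [hs.1]) j
      have e1b : (s - x) ^ j ≤ 1 := pow_le_one₀ (by linarith [hs.1]) (by linarith [hs.2])
      rw [abs_mul]
      calc |(s - x) ^ j| * |h s| ≤ 1 * 2 := by
            refine mul_le_mul ?_ (hbd s hs) (abs_nonneg _) zero_le_one
            rwa [abs_of_nonneg e1a]
      _ = 2 := one_mul 2
    -- shifted moments vanish
    have hms : ∀ j : ℕ, ∫ t in Set.Ioc x z, (t - x) ^ j * h t = 0 := by
      intro j
      have hpow : ∫ t in Set.Ioc x z, (t - x) ^ j = (z - x) ^ (j + 1) / (j + 1) := by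
        rw [← intervalIntegral.integral_of_le (le_of_lt hxz),
          intervalIntegral.integral_comp_sub_right (fun u => u ^ j) x]
        simp [integral_pow]
      have e1 : (fun t => (t - x) ^ j * h t)
          = fun t => (t - x) ^ j * (p x t * p t z) - (t - x) ^ j * p x z := by
        funext t
        rw [hh]
        ring
      rw [e1, MeasureTheory.integral_sub (int1 j) (int2 j),
        Mk hmeas hrange heq j x z hx hxz hz, MeasureTheory.integral_mul_const, hpow]
      ring
    -- ordinary moments vanish
    have hmom : ∀ kk : ℕ, ∫ t in Set.Ioc x z, t ^ kk * h t = 0 := by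
      intro kk
      have e : ∀ t : ℝ, t ^ kk * h t = ∑ m ∈ Finset.range (kk + 1),
          (x ^ (kk - m) * (kk.choose m : ℝ)) * ((t - x) ^ m * h t) := by
        intro t
        calc t ^ kk * h t = ((t - x) + x) ^ kk * h t := by ring
        _ = (∑ m ∈ Finset.range (kk + 1),
              (t - x) ^ m * x ^ (kk - m) * (kk.choose m : ℝ)) * h t := by rw [add_pow]
        _ = _ := by
            rw [Finset.sum_mul]
            exact Finset.sum_congr rfl fun m _ => by ring
      rw [show (fun t : ℝ => t ^ kk * h t) = _ from funext e,
        MeasureTheory.integral_finset_sum]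
      · exact Finset.sum_eq_zero fun m _ => by
          rw [MeasureTheory.integral_const_mul, hms m, mul_zero]
      · exact fun m _ => (intH m).const_mul _
    have := ae_zero_of_moments hxz hhm hbd hmom
    filter_upwards [this] with t ht
    rw [hh] at ht
    simp only at ht
    linarith
  -- assemble with Fubini
  set Bad : Set (ℝ × ℝ × ℝ) := {q | (0 ≤ q.1 ∧ q.1 ≤ q.2.1 ∧ q.2.1 ≤ q.2.2 ∧ q.2.2 ≤ 1)
    ∧ p q.1 q.2.2 ≠ p q.1 q.2.1 * p q.2.1 q.2.2} with hBad
  have hMeasBad : MeasurableSet Bad := by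
    rw [hBad]
    refine MeasurableSet.inter ?_ ?_
    · refine (MeasurableSet.inter ?_ (MeasurableSet.inter ?_ (MeasurableSet.inter ?_ ?_)))
      · exact measurableSet_le measurable_const measurable_fst
      · exact measurableSet_le measurable_fst (measurable_fst.comp measurable_snd)
      · exact measurableSet_le (measurable_fst.comp measurable_snd)
          (measurable_snd.comp measurable_snd)
      · exact measurableSet_le (measurable_snd.comp measurable_snd) measurable_const
    · have hf : Measurable fun q : ℝ × ℝ × ℝ => p q.1 q.2.2 :=
        hmeas.comp (measurable_fst.prodMk (measurable_snd.comp measurable_snd))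
      have hg : Measurable fun q : ℝ × ℝ × ℝ => p q.1 q.2.1 * p q.2.1 q.2.2 :=
        (hmeas.comp (measurable_fst.prodMk (measurable_fst.comp measurable_snd))).mul
          (hmeas.comp ((measurable_fst.comp measurable_snd).prodMk
            (measurable_snd.comp measurable_snd)))
      exact (measurableSet_eq_fun hf hg).compl
  -- slices are null
  have hslice : ∀ x z : ℝ, volume {y : ℝ | (x, y, z) ∈ Bad} = 0 := by
    intro x z
    by_cases hcase : 0 ≤ x ∧ x < z ∧ z ≤ 1
    · obtain ⟨hx, hxz, hz⟩ := hcase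
      have hae := key x z hx hxz hz
      have hNmeas : MeasurableSet {y : ℝ | ¬ (p x y * p y z = p x z)} :=
        (measurableSet_eq_fun (β := ℝ) (hpm x z) measurable_const).compl
      have hnull : volume ({y : ℝ | ¬ (p x y * p y z = p x z)} ∩ Set.Ioc x z) = 0 := by
        have h0 := ae_iff.1 hae
        rwa [Measure.restrict_apply hNmeas] at h0
      have hsub : {y : ℝ | (x, y, z) ∈ Bad}
          ⊆ ({y : ℝ | ¬ (p x y * p y z = p x z)} ∩ Set.Ioc x z) ∪ {x} := by
        intro y hy
        obtain ⟨⟨h0x, hxy, hyz, hz1⟩, hne⟩ := hy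
        rcases eq_or_lt_of_le hxy with heq' | hlt
        · exact Or.inr (Set.mem_singleton_iff.2 heq'.symm)
        · exact Or.inl ⟨fun hc => hne hc.symm, ⟨hlt, hyz⟩⟩
      exact measure_mono_null hsub (measure_union_null hnull (measure_singleton x))
    · have hsub : {y : ℝ | (x, y, z) ∈ Bad} ⊆ {x} := by
        intro y hy
        obtain ⟨⟨h0x, hxy, hyz, hz1⟩, hne⟩ := hy
        have hzx : z ≤ x := by
          by_contra hc
          push_neg at hc
          exact hcase ⟨h0x, hc, hz1⟩
        exact Set.mem_singleton_iff.2 (le_antisymm (le_trans hyz hzx) hxy)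
      exact measure_mono_null hsub (measure_singleton x)
  -- total measure of Bad is zero
  have hBadnull : volume Bad = 0 := by
    rw [Measure.volume_eq_prod, Measure.prod_apply hMeasBad]
    have hinner : ∀ x : ℝ, (volume : Measure (ℝ × ℝ)) (Prod.mk x ⁻¹' Bad) = 0 := by
      intro x
      rw [Measure.volume_eq_prod,
        Measure.prod_apply_symm (measurable_prodMk_left hMeasBad)]
      have h3 : ∀ z : ℝ, volume ((fun y => (y, z)) ⁻¹' (Prod.mk x ⁻¹' Bad)) = 0 := by
        intro z
        exact hslice x z
      simp only [h3]
      simp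
    simp only [hinner]
    simp
  rw [ae_iff]
  have hset : {q : ℝ × ℝ × ℝ | ¬ ((0 ≤ q.1 ∧ q.1 ≤ q.2.1 ∧ q.2.1 ≤ q.2.2 ∧ q.2.2 ≤ 1) →
      p q.1 q.2.2 = p q.1 q.2.1 * p q.2.1 q.2.2)} = Bad := by
    ext q
    simp only [hBad, Set.mem_setOf_eq, Classical.not_imp]
  rw [hset]
  exact hBadnull
end
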